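/- If X is uniform on [0,2] and f is the payoff function equal to 1 on intervals [2k, 2k+1] for integers k and 0 elsewhere, then sup_a E f(a + X) = 1/2 while sup_a E f(a + (3/2)X) = 2/3; in particular g_{X,f} is not decreasing. -/

import Mathlib

open MeasureTheory Set

/-- If `X` is uniform on `[0,2]` and `f` is `1` on the intervals `[2k, 2k+1]`
(`k ∈ ℤ`) and `0` elsewhere, then `sup_a E f(a + X) = 1/2` while
`sup_a E f(a + (3/2) X) = 2/3`; in particular `g_{X,f}` is not decreasing on `(0,∞)`. -/
theorem stmt0 {Ω : Type*} [MeasurableSpace Ω] (P : Measure Ω) [IsProbabilityMeasure P]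
    (X : Ω → ℝ) (hX : Measurable X)
    (hunif : P.map X = (2 : ENNReal)⁻¹ • (volume.restrict (Icc (0 : ℝ) 2)))
    (f : ℝ → ℝ)
    (hf : f = Set.indicator {x : ℝ | ∃ k : ℤ, (2 * k : ℝ) ≤ x ∧ x ≤ 2 * k + 1}
      (fun _ => (1 : ℝ))) :
    (⨆ a : ℝ, ∫ ω, f (a + X ω) ∂P) = 1 / 2 ∧
    (⨆ a : ℝ, ∫ ω, f (a + (3 / 2) * X ω) ∂P) = 2 / 3 ∧
    ¬ AntitoneOn (fun d : ℝ => ⨆ a : ℝ, ∫ ω, f (a + d * X ω) ∂P) (Ioi 0) := by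
  classical
  set S : Set ℝ := {x : ℝ | ∃ k : ℤ, (2 * k : ℝ) ≤ x ∧ x ≤ 2 * k + 1} with hSdef
  have hS : MeasurableSet S := by
    have : S = ⋃ k : ℤ, Icc ((2 * k : ℝ)) (2 * k + 1) := by
      ext x; simp [hSdef, mem_iUnion, mem_Icc]
    rw [this]
    exact MeasurableSet.iUnion fun k => measurableSet_Icc
  have hfm : Measurable f := by rw [hf]; exact measurable_const.indicator hS
  have hfb : ∀ x, ‖f x‖ ≤ 1 := by
    intro x; rw [hf, Set.indicator_apply]; split_ifs <;> norm_num
  -- interval integrability of f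
  have hint : ∀ u v : ℝ, IntervalIntegrable f volume u v := by
    intro u v
    rw [intervalIntegrable_iff]
    have hμ : volume (Set.uIoc u v) < ⊤ := by rw [Set.uIoc]; exact measure_Ioc_lt_top
    exact Integrable.mono' (integrableOn_const hμ.ne)
      hfm.aestronglyMeasurable.restrict (ae_of_all _ hfb)
  -- value of interval integrals of f as volumes
  have Ivol : ∀ u v : ℝ, u ≤ v → ∫ y in u..v, f y = (volume (Ioc u v ∩ S)).toReal := by
    intro u v huv
    rw [intervalIntegral.integral_of_le huv, hf, setIntegral_indicator hS, setIntegral_const,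
      smul_eq_mul, mul_one, measureReal_def]
  -- f is 2-periodic
  have hiff : ∀ y : ℝ, y + 2 ∈ S ↔ y ∈ S := by
    intro y
    constructor
    · rintro ⟨k, h1, h2⟩
      exact ⟨k - 1, by push_cast; linarith, by push_cast; linarith⟩
    · rintro ⟨k, h1, h2⟩
      exact ⟨k + 1, by push_cast; linarith, by push_cast; linarith⟩
  have hper : Function.Periodic f 2 := by
    intro x
    by_cases hx : x ∈ S
    · rw [hf]; rw [indicator_of_mem ((hiff x).2 hx), indicator_of_mem hx]
    · rw [hf]; rw [indicator_of_notMem (fun h => hx ((hiff x).1 h)), indicator_of_notMem hx]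
  -- integrals over basic intervals
  have I01 : ∫ y in (0:ℝ)..1, f y = 1 := by
    have h01 : EqOn f (fun _ => (1 : ℝ)) (uIcc (0:ℝ) 1) := by
      intro x hx
      rw [uIcc_of_le (by norm_num)] at hx
      obtain ⟨h0, h1⟩ := hx
      rw [hf]
      have hxS : x ∈ S := ⟨0, by push_cast; linarith, by push_cast; linarith⟩
      exact Set.indicator_of_mem hxS _
    rw [intervalIntegral.integral_congr h01, intervalIntegral.integral_const]
    norm_num
  have I23 : ∫ y in (2:ℝ)..3, f y = 1 := by
    have h23 : EqOn f (fun _ => (1 : ℝ)) (uIcc (2:ℝ) 3) := by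
      intro x hx
      rw [uIcc_of_le (by norm_num)] at hx
      obtain ⟨h0, h1⟩ := hx
      rw [hf]
      have hxS : x ∈ S := ⟨1, by push_cast; linarith, by push_cast; linarith⟩
      exact Set.indicator_of_mem hxS _
    rw [intervalIntegral.integral_congr h23, intervalIntegral.integral_const]
    norm_num
  have hB : Ioc (1:ℝ) 2 ∩ S = {2} := by
    ext x
    simp only [mem_inter_iff, mem_Ioc, hSdef, mem_setOf_eq, mem_singleton_iff]
    constructor
    · rintro ⟨⟨hx1, hx2⟩, k, hk1, hk2⟩
      have hk0 : (1:ℤ) ≤ k := by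
        by_contra h
        push_neg at h
        have hk : k ≤ 0 := by omega
        have : (k:ℝ) ≤ 0 := by exact_mod_cast hk
        linarith
      have hk1' : k ≤ 1 := by
        by_contra h
        push_neg at h
        have hk : (2:ℤ) ≤ k := by omega
        have : (2:ℝ) ≤ (k:ℝ) := by exact_mod_cast hk
        linarith
      have hk : k = 1 := le_antisymm hk1' hk0
      subst hk
      push_cast at hk1 hk2
      linarith
    · rintro rfl
      refine ⟨⟨by norm_num, le_refl 2⟩, 1, by push_cast; norm_num, by push_cast; norm_num⟩
  have I12 : ∫ y in (1:ℝ)..2, f y = 0 := by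
    rw [Ivol 1 2 (by norm_num), hB]
    simp
  have I02 : ∫ y in (0:ℝ)..2, f y = 1 := by
    rw [← intervalIntegral.integral_add_adjacent_intervals (hint 0 1) (hint 1 2), I01, I12]
    norm_num
  -- integral over any period-length interval
  have I2 : ∀ a : ℝ, ∫ y in a..(a + 2), f y = 1 := by
    intro a
    have := hper.intervalIntegral_add_eq a 0
    rw [this]
    norm_num [I02]
  -- bound for unit-length intervals
  have Ibnd : ∀ c : ℝ, ∫ y in c..(c + 1), f y ≤ 1 := by
    intro c
    rw [Ivol c (c + 1) (by linarith)]
    have h1 : volume (Ioc c (c + 1) ∩ S) ≤ 1 := by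
      refine le_trans (measure_mono inter_subset_left) ?_
      have h2 : c + 1 - c = 1 := by ring
      rw [Real.volume_Ioc, h2, ENNReal.ofReal_one]
    calc (volume (Ioc c (c + 1) ∩ S)).toReal ≤ (1 : ENNReal).toReal :=
          ENNReal.toReal_mono ENNReal.one_ne_top h1
      _ = 1 := by simp
  have I3le : ∀ a : ℝ, ∫ y in a..(a + 3), f y ≤ 2 := by
    intro a
    have hsplit : (∫ y in a..(a + 2), f y) + ∫ y in (a + 2)..(a + 3), f y
        = ∫ y in a..(a + 3), f y :=
      intervalIntegral.integral_add_adjacent_intervals (hint _ _) (hint _ _)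
    have h2 : a + 3 = (a + 2) + 1 := by ring
    have hb := Ibnd (a + 2)
    rw [← h2] at hb
    have h1 := I2 a
    linarith [hsplit]
  have I30 : ∫ y in (0:ℝ)..3, f y = 2 := by
    rw [← intervalIntegral.integral_add_adjacent_intervals (hint 0 2) (hint 2 3), I02, I23]
    norm_num
  -- the key computation of the expectation
  have key : ∀ d : ℝ, 0 < d → ∀ a : ℝ,
      ∫ ω, f (a + d * X ω) ∂P = (2 * d)⁻¹ * ∫ y in a..(a + 2 * d), f y := by
    intro d hd a
    have hg : Measurable fun x : ℝ => f (a + d * x) :=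
      hfm.comp (measurable_const.add (measurable_const.mul measurable_id))
    rw [show (∫ ω, f (a + d * X ω) ∂P) = ∫ x, f (a + d * x) ∂(P.map X) from
      (integral_map hX.aemeasurable hg.aestronglyMeasurable).symm]
    rw [hunif, integral_smul_measure]
    rw [integral_Icc_eq_integral_Ioc,
      ← intervalIntegral.integral_of_le (by norm_num : (0:ℝ) ≤ 2)]
    have hcomp : (∫ x in (0:ℝ)..2, f (a + d * x))
        = d⁻¹ • ∫ y in (d * 0 + a)..(d * 2 + a), f y := by
      simp_rw [show ∀ x : ℝ, a + d * x = d * x + a from fun x => add_comm _ _]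
      exact intervalIntegral.integral_comp_mul_add f hd.ne' a
    rw [hcomp, show d * 0 + a = a by ring, show d * 2 + a = a + 2 * d by ring]
    have h2 : ((2 : ENNReal)⁻¹).toReal = 2⁻¹ := by simp
    rw [h2, smul_eq_mul, smul_eq_mul, mul_inv]
    ring
  -- the three claims
  have g1 : ∀ a : ℝ, ∫ ω, f (a + X ω) ∂P = 1 / 2 := by
    intro a
    have := key 1 one_pos a
    simp only [one_mul] at this
    rw [this, show a + 2 * 1 = a + 2 by ring, I2 a]
    norm_num
  have part1 : (⨆ a : ℝ, ∫ ω, f (a + X ω) ∂P) = 1 / 2 := by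
    simp only [g1]
    exact ciSup_const
  have g32 : ∀ a : ℝ, ∫ ω, f (a + (3 / 2) * X ω) ∂P = 3⁻¹ * ∫ y in a..(a + 3), f y := by
    intro a
    have := key (3 / 2) (by norm_num) a
    rw [this, show a + 2 * (3 / 2) = a + 3 by ring]
    norm_num
  have hub : ∀ a : ℝ, ∫ ω, f (a + (3 / 2) * X ω) ∂P ≤ 2 / 3 := by
    intro a
    rw [g32 a]
    have := I3le a
    linarith
  have h0 : ∫ ω, f ((0:ℝ) + (3 / 2) * X ω) ∂P = 2 / 3 := by
    rw [g32 0, show (0:ℝ) + 3 = 3 by norm_num, I30]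
    norm_num
  have part2 : (⨆ a : ℝ, ∫ ω, f (a + (3 / 2) * X ω) ∂P) = 2 / 3 := by
    refine le_antisymm (ciSup_le hub) ?_
    have := le_ciSup (f := fun a : ℝ => ∫ ω, f (a + (3 / 2) * X ω) ∂P)
      ⟨2 / 3, forall_mem_range.2 hub⟩ 0
    rwa [h0] at this
  refine ⟨part1, part2, ?_⟩
  intro h
  have hle := h (mem_Ioi.2 one_pos) (mem_Ioi.2 (by norm_num : (0:ℝ) < 3 / 2))
    (by norm_num : (1:ℝ) ≤ 3 / 2)
  simp only at hle
  have e1 : (⨆ a : ℝ, ∫ ω, f (a + 1 * X ω) ∂P) = 1 / 2 := by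
    simp only [one_mul]
    exact part1
  rw [part2, e1] at hle
  norm_num at hle
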